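/- Let V be a vector space of dimension r over a field K and suppose given 2r vectors p_{i,j} ∈ V (i ∈ {1,…,r}, j ∈ {+,-}) spanning V. If there is no subset I ⊆ {1,…,r} with 1 ≤ |I| = k ≤ r and dim span{p_{i,j} : i ∈ I, j ∈ {+,-}} < k, then there exists a choice function σ : {1,…,r} → {+,-} such that the matrix whose columns are p_{1,σ(1)},…,p_{r,σ(r)} (in any fixed basis of V) has nonzero determinant. -/

import Mathlib

open Submodule Module

universe u v w

section Rado

variable {K : Type u} [Field K]

private lemma pairs_union {V : Type v} {ι : Type w} [AddCommGroup V] [Module K V]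
    [DecidableEq ι] (p : ι → Bool → V) (A B : Finset ι) :
    Submodule.span K {v : V | ∃ i ∈ A ∪ B, ∃ j : Bool, p i j = v}
      = Submodule.span K {v : V | ∃ i ∈ A, ∃ j : Bool, p i j = v}
        ⊔ Submodule.span K {v : V | ∃ i ∈ B, ∃ j : Bool, p i j = v} := by
  rw [← Submodule.span_union]
  congr 1
  ext v
  simp only [Set.mem_setOf_eq, Set.mem_union, Finset.mem_union]
  aesop

private lemma finrank_map_mkQ_add {V : Type v} [AddCommGroup V] [Module K V]
    [FiniteDimensional K V] (W S : Submodule K V) :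
    finrank K (S.map W.mkQ) + finrank K ↥(W ⊓ S) = finrank K S := by
  set g := W.mkQ.comp S.subtype with hg
  have hr : LinearMap.range g = S.map W.mkQ := by
    rw [hg, LinearMap.range_comp, Submodule.range_subtype]
  have hk : LinearMap.ker g = Submodule.comap S.subtype (W ⊓ S) := by
    rw [hg, LinearMap.ker_comp, Submodule.ker_mkQ]
    ext x
    simp [x.2]
  have h := LinearMap.finrank_range_add_finrank_ker g
  rw [hr, hk] at h
  rwa [(Submodule.comapSubtypeEquivOfLe (inf_le_right : W ⊓ S ≤ S)).finrank_eq] at h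

private lemma finrank_map_mkQ_sup {V : Type v} [AddCommGroup V] [Module K V]
    [FiniteDimensional K V] (W S : Submodule K V) :
    finrank K (S.map W.mkQ) + finrank K W = finrank K ↥(S ⊔ W) := by
  have h := finrank_map_mkQ_add W (S ⊔ W)
  have h2 : W.map W.mkQ = ⊥ := by
    exact Submodule.mkQ_map_self W
  rw [Submodule.map_sup, h2, sup_bot_eq, inf_eq_left.mpr le_sup_right] at h
  exact h

private lemma rado_step {V : Type v} [AddCommGroup V] [Module K V] [FiniteDimensional K V]
    {ι : Type w} [Fintype ι] [DecidableEq ι] (p : ι → Bool → V)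
    (IH : ∀ (V' : Type v) [AddCommGroup V'] [Module K V'] [FiniteDimensional K V']
      (ι' : Type w) [Fintype ι'] [DecidableEq ι'] (p' : ι' → Bool → V'),
      Fintype.card ι' < Fintype.card ι →
      (∀ I : Finset ι', I.card ≤
        finrank K (Submodule.span K {v : V' | ∃ i ∈ I, ∃ j : Bool, p' i j = v})) →
      ∃ σ : ι' → Bool, LinearIndependent K fun i => p' i (σ i))
    (I : Finset ι) (hne : I.Nonempty) (W : Submodule K V) (σ₁ : ι → Bool)
    (hmem : ∀ i ∈ I, p i (σ₁ i) ∈ W)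
    (hinner : LinearIndependent K fun i : ↥I => p i.val (σ₁ i.val))
    (hq : ∀ J : Finset ι, (∀ i ∈ J, i ∉ I) → J.card + finrank K W ≤
      finrank K ↥(Submodule.span K {v : V | ∃ i ∈ J, ∃ j : Bool, p i j = v} ⊔ W)) :
    ∃ σ : ι → Bool, LinearIndependent K fun i => p i (σ i) := by
  classical
  have hcard2 : Fintype.card ↥(Iᶜ) < Fintype.card ι := by
    rw [Fintype.card_coe, Finset.card_compl]
    have h1 : 1 ≤ I.card := hne.card_pos
    have h2 : I.card ≤ Fintype.card ι := I.card_le_univ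
    omega
  set q : ↥(Iᶜ) → Bool → V ⧸ W := fun i j => W.mkQ (p i.val j) with hqdef
  have hallq : ∀ J : Finset ↥(Iᶜ), J.card ≤
      finrank K (Submodule.span K {v' : V ⧸ W | ∃ i ∈ J, ∃ j : Bool, q i j = v'}) := by
    intro J
    set J' : Finset ι := J.image Subtype.val with hJ'
    have hJc : J'.card = J.card := Finset.card_image_of_injective J Subtype.val_injective
    have hset : {v' : V ⧸ W | ∃ i ∈ J, ∃ j : Bool, q i j = v'}
        = W.mkQ '' {v : V | ∃ i ∈ J', ∃ j : Bool, p i j = v} := by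
      ext v'
      simp only [hqdef, Set.mem_setOf_eq, Set.mem_image, hJ', Finset.mem_image]
      constructor
      · rintro ⟨i, hi, j, rfl⟩
        exact ⟨p i.val j, ⟨i.val, ⟨i, hi, rfl⟩, j, rfl⟩, rfl⟩
      · rintro ⟨v, ⟨i, ⟨a, ha, rfl⟩, j, rfl⟩, rfl⟩
        exact ⟨a, ha, j, rfl⟩
    have hnot : ∀ i ∈ J', i ∉ I := by
      intro i hi
      rw [hJ', Finset.mem_image] at hi
      obtain ⟨a, _, rfl⟩ := hi
      exact Finset.mem_compl.mp a.2
    have hrk := finrank_map_mkQ_sup (K := K) W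
      (Submodule.span K {v : V | ∃ i ∈ J', ∃ j : Bool, p i j = v})
    have := hq J' hnot
    rw [hset, Submodule.span_image]
    omega
  obtain ⟨σ₂, houter⟩ := IH (V ⧸ W) ↥(Iᶜ) q hcard2 hallq
  set σ : ι → Bool := fun i =>
    if h : i ∈ I then σ₁ i else σ₂ ⟨i, Finset.mem_compl.mpr h⟩ with hσ
  have hσI : ∀ i ∈ I, σ i = σ₁ i := fun i hi => dif_pos hi
  have hσC : ∀ i : ↥(Iᶜ), σ i.val = σ₂ i := by
    intro i
    have : i.val ∉ I := Finset.mem_compl.mp i.2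
    simp [hσ, this]
  refine ⟨σ, Fintype.linearIndependent_iff.mpr fun c hc => ?_⟩
  have hcomp : ∀ i : ↥(Iᶜ), c i.val = 0 := by
    apply Fintype.linearIndependent_iff.mp houter (fun i => c i.val)
    have h1 : ∑ i : ι, c i • W.mkQ (p i (σ i)) = 0 := by
      have : ∑ i : ι, c i • W.mkQ (p i (σ i)) = W.mkQ (∑ i : ι, c i • p i (σ i)) := by
        rw [map_sum]
        simp
      rw [this, hc, map_zero]
    have hI0 : ∑ i ∈ I, c i • W.mkQ (p i (σ i)) = 0 := by
      apply Finset.sum_eq_zero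
      intro i hi
      rw [hσI i hi,
        show W.mkQ (p i (σ₁ i)) = 0 from (Submodule.Quotient.mk_eq_zero W).mpr (hmem i hi),
        smul_zero]
    have h2 : ∑ i ∈ Iᶜ, c i • W.mkQ (p i (σ i)) = 0 := by
      have h3 := Finset.sum_add_sum_compl I (fun i => c i • W.mkQ (p i (σ i)))
      rw [hI0, zero_add] at h3
      rw [h3, h1]
    calc ∑ i : ↥(Iᶜ), c i.val • q i (σ₂ i)
        = ∑ i : ↥(Iᶜ), c i.val • W.mkQ (p i.val (σ i.val)) := by
          refine Finset.sum_congr rfl fun i _ => ?_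
          rw [hσC i]
      _ = ∑ i ∈ Iᶜ, c i • W.mkQ (p i (σ i)) := Finset.sum_coe_sort Iᶜ (fun i => c i • W.mkQ (p i (σ i)))
      _ = 0 := h2
  have hIzero : ∀ i : ↥I, c i.val = 0 := by
    apply Fintype.linearIndependent_iff.mp hinner (fun i => c i.val)
    have h4 : ∑ i ∈ I, c i • p i (σ i) = 0 := by
      have h3 := Finset.sum_add_sum_compl I (fun i => c i • p i (σ i))
      have h5 : ∑ i ∈ Iᶜ, c i • p i (σ i) = 0 := by
        apply Finset.sum_eq_zero
        intro i hi
        rw [hcomp ⟨i, hi⟩, zero_smul]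
      rw [h5, add_zero, hc] at h3
      exact h3
    calc ∑ i : ↥I, c i.val • p i.val (σ₁ i.val)
        = ∑ i : ↥I, c i.val • p i.val (σ i.val) := by
          refine Finset.sum_congr rfl fun i _ => ?_
          rw [hσI i.val i.2]
      _ = ∑ i ∈ I, c i • p i (σ i) := Finset.sum_coe_sort I (fun i => c i • p i (σ i))
      _ = 0 := h4
  intro i
  by_cases h : i ∈ I
  · exact hIzero ⟨i, h⟩
  · exact hcomp ⟨i, Finset.mem_compl.mpr h⟩

private lemma rado (n : ℕ) : ∀ (V : Type v) [AddCommGroup V] [Module K V]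
    [FiniteDimensional K V] (ι : Type w) [Fintype ι] [DecidableEq ι]
    (p : ι → Bool → V), Fintype.card ι = n →
    (∀ I : Finset ι, I.card ≤
      finrank K (Submodule.span K {v : V | ∃ i ∈ I, ∃ j : Bool, p i j = v})) →
    ∃ σ : ι → Bool, LinearIndependent K fun i => p i (σ i) := by
  induction n using Nat.strong_induction_on with
  | _ n IH =>
  intro V _ _ _ ι _ _ p hcard hall
  rcases isEmpty_or_nonempty ι with hempty | hne
  · exact ⟨fun _ => true, linearIndependent_empty_type⟩
  subst hcard
  have IH' : ∀ (V' : Type v) [AddCommGroup V'] [Module K V'] [FiniteDimensional K V']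
      (ι' : Type w) [Fintype ι'] [DecidableEq ι'] (p' : ι' → Bool → V'),
      Fintype.card ι' < Fintype.card ι →
      (∀ I : Finset ι', I.card ≤
        finrank K (Submodule.span K {v : V' | ∃ i ∈ I, ∃ j : Bool, p' i j = v})) →
      ∃ σ : ι' → Bool, LinearIndependent K fun i => p' i (σ i) := by
    intro V' _ _ _ ι' _ _ p' hlt hall'
    exact IH (Fintype.card ι') hlt V' ι' p' rfl hall'
  by_cases htight : ∃ I : Finset ι, I.Nonempty ∧ I ≠ Finset.univ ∧
      finrank K (Submodule.span K {v : V | ∃ i ∈ I, ∃ j : Bool, p i j = v}) ≤ I.card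
  · obtain ⟨I, hIne, hIuniv, htt⟩ := htight
    have hIlt : Fintype.card ↥I < Fintype.card ι := by
      rw [Fintype.card_coe]
      exact I.card_lt_iff_ne_univ.mpr hIuniv
    have hsetJ : ∀ J : Finset ↥I, {v : V | ∃ i ∈ J, ∃ j : Bool, p i.val j = v}
        = {v : V | ∃ i ∈ J.image Subtype.val, ∃ j : Bool, p i j = v} := by
      intro J
      ext v
      simp only [Set.mem_setOf_eq, Finset.mem_image]
      constructor
      · rintro ⟨i, hi, j, rfl⟩
        exact ⟨i.val, ⟨i, hi, rfl⟩, j, rfl⟩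
      · rintro ⟨i, ⟨a, ha, rfl⟩, j, rfl⟩
        exact ⟨a, ha, j, rfl⟩
    obtain ⟨σ₁', hσ₁'⟩ := IH' V ↥I (fun i j => p i.val j) hIlt (by
      intro J
      rw [hsetJ J, ← Finset.card_image_of_injective J Subtype.val_injective]
      exact hall _)
    set σ₁ : ι → Bool := fun i => if h : i ∈ I then σ₁' ⟨i, h⟩ else true with hσ₁
    apply rado_step p IH' I hIne
      (Submodule.span K {v : V | ∃ i ∈ I, ∃ j : Bool, p i j = v}) σ₁
    · intro i hi
      exact Submodule.subset_span ⟨i, hi, σ₁ i, rfl⟩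
    · have heq : (fun i : ↥I => p i.val (σ₁ i.val)) = fun i : ↥I => p i.val (σ₁' i) := by
        funext i
        rw [hσ₁]
        simp only [i.2, dif_pos]
      rw [heq]
      exact hσ₁'
    · intro J hJ
      have hd : Disjoint J I := Finset.disjoint_left.mpr hJ
      have hcardU : (J ∪ I).card = J.card + I.card := Finset.card_union_of_disjoint hd
      have h1 := hall (J ∪ I)
      rw [pairs_union p J I] at h1
      omega
  · push_neg at htight
    obtain ⟨i₀⟩ := hne
    have hnz : ∃ j₀ : Bool, p i₀ j₀ ≠ 0 := by
      by_contra h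
      push_neg at h
      have h1 := hall {i₀}
      have hle : Submodule.span K {v : V | ∃ i ∈ ({i₀} : Finset ι), ∃ j : Bool, p i j = v}
          ≤ ⊥ := by
        rw [← Submodule.span_zero_singleton K]
        apply Submodule.span_mono
        rintro v ⟨i, hi, j, rfl⟩
        rw [Finset.mem_singleton] at hi
        subst hi
        exact h j
      rw [Finset.card_singleton] at h1
      have h2 : finrank K (Submodule.span K
          {v : V | ∃ i ∈ ({i₀} : Finset ι), ∃ j : Bool, p i j = v}) = 0 := by
        rw [le_bot_iff.mp hle, finrank_bot]
      omega
    obtain ⟨j₀, hj₀⟩ := hnz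
    have hW1 : finrank K (K ∙ p i₀ j₀) = 1 := finrank_span_singleton hj₀
    apply rado_step p IH' {i₀} (Finset.singleton_nonempty i₀) (K ∙ p i₀ j₀) (fun _ => j₀)
    · intro i hi
      rw [Finset.mem_singleton] at hi
      subst hi
      exact Submodule.mem_span_singleton_self _
    · haveI : Unique ↥({i₀} : Finset ι) :=
        ⟨⟨⟨i₀, Finset.mem_singleton_self i₀⟩⟩,
          fun a => Subtype.ext (Finset.mem_singleton.mp a.2)⟩
      apply linearIndependent_unique_iff.mpr
      have hd : ((default : ↥({i₀} : Finset ι)) : ι) = i₀ :=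
        Finset.mem_singleton.mp (default : ↥({i₀} : Finset ι)).2
      rw [hd]
      exact hj₀
    · intro J hJ
      rcases J.eq_empty_or_nonempty with rfl | hJne
      · simp only [Finset.card_empty, zero_add]
        exact Submodule.finrank_mono le_sup_right
      · have hJuniv : J ≠ Finset.univ := fun h =>
          (hJ i₀ (h ▸ Finset.mem_univ i₀)) (Finset.mem_singleton_self i₀)
        have h1 := htight J hJne hJuniv
        have hm := Submodule.finrank_mono
          (le_sup_left : Submodule.span K {v : V | ∃ i ∈ J, ∃ j : Bool, p i j = v}
            ≤ _ ⊔ (K ∙ p i₀ j₀))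
        omega

end Rado

/-- Determinantal reformulation of Theorem A.1: if no subset `I` with
`1 ≤ |I| ≤ r` has the span of its `2|I|` vectors of dimension `< |I|`, then
some sign choice `σ` gives a transversal family whose coordinate matrix (in
any fixed basis of `V`) has nonzero determinant. -/
theorem stmt8 {K V : Type*} [Field K] [AddCommGroup V] [Module K V]
    [FiniteDimensional K V]
    (r : ℕ) (hr : 1 ≤ r) (hdim : Module.finrank K V = r)
    (b : Basis (Fin r) K V)
    (p : Fin r → Bool → V)
    (hspan : Submodule.span K (Set.range fun x : Fin r × Bool => p x.1 x.2) = ⊤)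
    (hnodeg : ¬ ∃ I : Finset (Fin r), 1 ≤ I.card ∧ I.card ≤ r ∧
      Module.finrank K
        (Submodule.span K {v : V | ∃ i ∈ I, ∃ j : Bool, p i j = v}) < I.card) :
    ∃ σ : Fin r → Bool,
      (Matrix.of fun k i : Fin r => b.repr (p i (σ i)) k).det ≠ 0 := by
  classical
  push_neg at hnodeg
  have hall : ∀ I : Finset (Fin r), I.card ≤
      finrank K (Submodule.span K {v : V | ∃ i ∈ I, ∃ j : Bool, p i j = v}) := by
    intro I
    rcases Finset.eq_empty_or_nonempty I with rfl | hne
    · simp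
    · have h2 : I.card ≤ r := by simpa using I.card_le_univ
      exact hnodeg I hne.card_pos h2
  obtain ⟨σ, hli⟩ := rado (K := K) r V (Fin r) p (by simp) hall
  have hcardeq : Fintype.card (Fin r) = finrank K V := by simp [hdim]
  haveI : Nonempty (Fin r) := ⟨⟨0, hr⟩⟩
  set c : Basis (Fin r) K V := basisOfLinearIndependentOfCardEqFinrank hli hcardeq with hc
  have hM : (Matrix.of fun k i : Fin r => b.repr (p i (σ i)) k) = b.toMatrix ⇑c := by
    ext k i
    rw [Basis.toMatrix_apply, hc, coe_basisOfLinearIndependentOfCardEqFinrank]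
    rfl
  refine ⟨σ, ?_⟩
  rw [hM]
  haveI := b.invertibleToMatrix c
  exact (Matrix.isUnit_det_of_invertible _).ne_zero
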